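/- Let P ⊆ ℝ^N be a closed, convex and CP admissible set. Then for every matrix A ∈ ℝ^{m×N}, every index set 𝒥 ⊆ {1,…,N}, and every y ∈ ℝ^m, the problem min_w ‖A w − y‖₂² subject to w ∈ P and supp(w) ⊆ 𝒥 attains an optimal solution. In particular, A P = {A x : x ∈ P} is a closed subset of ℝ^m. -/

import Mathlib

open Matrix Set

/-- `P` is coordinate projection (CP) admissible: for every `x ∈ P` and every
index set `J ⊆ supp(x)`, the coordinate projection `π_J(x)` belongs to `P`. -/
def CPAdmissible {N : ℕ} (P : Set (Fin N → ℝ)) : Prop :=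
  ∀ x ∈ P, ∀ J : Set (Fin N), J ⊆ {i | x i ≠ 0} → J.indicator x ∈ P

open Filter Topology in
private lemma box_mem {N : ℕ} {P : Set (Fin N → ℝ)} (hconv : Convex ℝ P) (hcp : CPAdmissible P)
    {x : Fin N → ℝ} (hx : x ∈ P) (c : Fin N → ℝ) (hc : ∀ i, c i ∈ Set.Icc (0:ℝ) 1) :
    (fun i => c i * x i) ∈ P := by
  suffices h : ∀ S : Finset (Fin N), ∀ c : Fin N → ℝ, (∀ i, c i ∈ Set.Icc (0:ℝ) 1) →
      (∀ i ∉ S, c i = 1) → (fun i => c i * x i) ∈ P from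
    h Finset.univ c hc (by simp)
  intro S
  induction S using Finset.induction_on with
  | empty =>
    intro c hc h1
    have : (fun i => c i * x i) = x := funext fun i => by
      rw [h1 i (Finset.notMem_empty i), one_mul]
    rwa [this]
  | insert j S hjS IH =>
    intro c hc h1
    set c' := Function.update c j 1 with hc'def
    set c'' := Function.update c j 0 with hc''def
    have hc' : ∀ i, c' i ∈ Set.Icc (0:ℝ) 1 := fun i => by
      by_cases h : i = j
      · subst h; simp [c']
      · simpa [c', Function.update_of_ne h] using hc i
    have h1' : ∀ i ∉ S, c' i = 1 := fun i hi => by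
      by_cases h : i = j
      · subst h; simp [c']
      · show Function.update c j 1 i = 1
        rw [Function.update_of_ne h]
        exact h1 i (by simp [h, hi])
    have hP' : (fun i => c' i * x i) ∈ P := IH c' hc' h1'
    have hP'' : (fun i => c'' i * x i) ∈ P := by
      have hsub : ({i | c' i * x i ≠ 0} \ {j} : Set (Fin N)) ⊆ {i | c' i * x i ≠ 0} :=
        Set.diff_subset
      have := hcp _ hP' _ hsub
      have heq : Set.indicator ({i | c' i * x i ≠ 0} \ {j}) (fun i => c' i * x i)
          = (fun i => c'' i * x i) := by
        funext i
        simp only [Set.indicator_apply, Set.mem_diff, Set.mem_setOf_eq, Set.mem_singleton_iff]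
        by_cases h : i = j
        · subst h; simp [c'']
        · have e' : c' i = c i := Function.update_of_ne h _ _
          have e'' : c'' i = c i := Function.update_of_ne h _ _
          rw [e', e'']
          by_cases h0 : c i * x i = 0
          · simp [h0, h]
          · simp [h0, h]
      rwa [heq] at this
    have hcj := hc j
    have key : (fun i => c i * x i)
        = (1 - c j) • (fun i => c'' i * x i) + (c j) • (fun i => c' i * x i) := by
      funext i
      by_cases h : i = j
      · subst h
        simp only [Pi.add_apply, Pi.smul_apply, smul_eq_mul, hc'def, hc''def,
          Function.update_self]
        ring
      · have e' : c' i = c i := Function.update_of_ne h _ _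
        have e'' : c'' i = c i := Function.update_of_ne h _ _
        simp only [Pi.add_apply, Pi.smul_apply, smul_eq_mul, e', e'']
        ring
    rw [key]
    exact hconv hP'' hP' (by linarith [hcj.2]) hcj.1 (by ring)

open Filter Topology in
private lemma closedQ {N m : ℕ} {P : Set (Fin N → ℝ)}
    (hcl : IsClosed P) (hconv : Convex ℝ P) (hcp : CPAdmissible P)
    (A : Matrix (Fin m) (Fin N) ℝ) (J : Finset (Fin N)) :
    IsClosed (A.mulVec '' {w | w ∈ P ∧ ∀ i, w i ≠ 0 → i ∈ J}) := by
  have contA : Continuous (fun v : Fin N → ℝ => A.mulVec v) :=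
    continuous_const.matrix_mulVec continuous_id
  induction J using Finset.strongInduction with
  | _ J IH =>
  apply IsSeqClosed.isClosed
  intro v p hv hvp
  choose w hwQ hAw using hv
  have hvp' : Tendsto (fun n => A.mulVec (w n)) atTop (𝓝 p) := by
    simpa only [hAw] using hvp
  by_cases hB : Tendsto (fun n => ‖w n‖) atTop atTop
  · -- unbounded case
    set u : ℕ → Fin N → ℝ := fun n => ‖w n‖⁻¹ • w n with hu
    have hu1 : ∀ n, u n ∈ Metric.closedBall (0 : Fin N → ℝ) 1 := by
      intro n
      rw [Metric.mem_closedBall, dist_zero_right, hu, norm_smul, norm_inv, norm_norm]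
      rcases ((norm_nonneg (w n)).eq_or_lt.imp_left Eq.symm) with h | h
      · rw [h]; norm_num
      · rw [inv_mul_cancel₀ h.ne']
    obtain ⟨d, -, ψ, hψ, hd⟩ := (isCompact_closedBall (0 : Fin N → ℝ) 1).tendsto_subseq hu1
    have hwψ : Tendsto (fun n => ‖w (ψ n)‖) atTop atTop := hB.comp hψ.tendsto_atTop
    have hwpos : ∀ᶠ n in atTop, 0 < ‖w (ψ n)‖ := hwψ.eventually (eventually_gt_atTop 0)
    have hnormd : ‖d‖ = 1 := by
      have h1 : Tendsto (fun n => ‖u (ψ n)‖) atTop (𝓝 ‖d‖) :=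
        (continuous_norm.tendsto d).comp hd
      have h2 : ∀ᶠ n in atTop, ‖u (ψ n)‖ = 1 :=
        hwpos.mono fun n hn => by
          rw [hu, norm_smul, norm_inv, norm_norm, inv_mul_cancel₀ hn.ne']
      exact tendsto_nhds_unique (h1.congr' (h2.mono fun n hn => hn)) tendsto_const_nhds
    have hAd : A.mulVec d = 0 := by
      have h1 : Tendsto (fun n => A.mulVec (u (ψ n))) atTop (𝓝 (A.mulVec d)) :=
        (contA.tendsto d).comp hd
      have h2 : (fun n => A.mulVec (u (ψ n)))
          = fun n => ‖w (ψ n)‖⁻¹ • A.mulVec (w (ψ n)) := by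
        funext n; rw [hu]; simp [Matrix.mulVec_smul]
      have h3 : Tendsto (fun n => ‖w (ψ n)‖⁻¹ • A.mulVec (w (ψ n))) atTop
          (𝓝 ((0:ℝ) • p)) :=
        (tendsto_inv_atTop_zero.comp hwψ).smul (hvp'.comp hψ.tendsto_atTop)
      rw [h2] at h1
      have := tendsto_nhds_unique h1 h3
      simpa using this
    have hd0 : d ≠ 0 := fun h => by simp [h] at hnormd
    set S : Finset (Fin N) := Finset.univ.filter (fun i => d i ≠ 0) with hS
    have hSmem : ∀ i, i ∈ S ↔ d i ≠ 0 := fun i => by simp [hS]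
    have hSne : S.Nonempty := by
      obtain ⟨i, hi⟩ := Function.ne_iff.1 hd0
      exact ⟨i, (hSmem i).2 (by simpa using hi)⟩
    have hui : ∀ i, Tendsto (fun n => u (ψ n) i) atTop (𝓝 (d i)) := fun i =>
      ((continuous_apply i).tendsto d).comp hd
    have hSJ : S ⊆ J := by
      intro i hi
      have hdi := (hSmem i).1 hi
      have h1 : ∀ᶠ n in atTop, u (ψ n) i ≠ 0 := (hui i).eventually_ne hdi
      obtain ⟨n, hn1, hn2⟩ := (h1.and hwpos).exists
      have hwi : w (ψ n) i ≠ 0 := by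
        intro h; apply hn1; rw [hu]; simp [h]
      exact (hwQ (ψ n)).2 i hwi
    have hsign : ∀ᶠ n in atTop, ∀ i ∈ S, 0 < w (ψ n) i / d i := by
      rw [eventually_all_finset]
      intro i hi
      have hdi := (hSmem i).1 hi
      have h1 : Tendsto (fun n => u (ψ n) i / d i) atTop (𝓝 (d i / d i)) :=
        (hui i).div_const _
      rw [div_self hdi] at h1
      have h2 : ∀ᶠ n in atTop, 0 < u (ψ n) i / d i :=
        h1.eventually_const_lt (by norm_num)
      filter_upwards [h2, hwpos] with n h2 h3
      have : w (ψ n) i = ‖w (ψ n)‖ * u (ψ n) i := by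
        rw [hu]
        simp only [Pi.smul_apply, smul_eq_mul]
        rw [← mul_assoc, mul_inv_cancel₀ h3.ne', one_mul]
      rw [this, mul_div_assoc]
      exact mul_pos h3 h2
    set T : Set (Fin m → ℝ) := ⋃ i ∈ S, A.mulVec '' {w | w ∈ P ∧ ∀ j, w j ≠ 0 → j ∈ J.erase i}
      with hT
    have hTc : IsClosed T :=
      S.finite_toSet.isClosed_biUnion fun i hi =>
        IH (J.erase i) (Finset.erase_ssubset (hSJ hi))
    have hEv : ∀ᶠ n in atTop, A.mulVec (w (ψ n)) ∈ T := by
      filter_upwards [hsign, hwpos] with n h1 h2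
      set t : ℝ := S.inf' hSne (fun i => w (ψ n) i / d i) with ht
      obtain ⟨i0, hi0S, hti0⟩ := S.exists_mem_eq_inf' hSne (fun i => w (ψ n) i / d i)
      have ht_pos : 0 < t := (Finset.lt_inf'_iff _).2 h1
      have ht_le : ∀ i ∈ S, t ≤ w (ψ n) i / d i := fun i hi => Finset.inf'_le _ hi
      set c : Fin N → ℝ := fun i => if d i = 0 then 1 else 1 - t * (d i / w (ψ n) i) with hcdef
      have hwne : ∀ i ∈ S, w (ψ n) i ≠ 0 := by
        intro i hi h0
        have := h1 i hi
        rw [h0, zero_div] at this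
        exact lt_irrefl _ this
      have hfrac : ∀ i ∈ S, t * (d i / w (ψ n) i) = t / (w (ψ n) i / d i) := by
        intro i hi
        rw [div_div_eq_mul_div, ← mul_div_assoc]
      have hc : ∀ i, c i ∈ Set.Icc (0:ℝ) 1 := by
        intro i
        rw [hcdef]
        by_cases hdi : d i = 0
        · simp [hdi]
        · have hiS : i ∈ S := (hSmem i).2 hdi
          have hr := h1 i hiS
          have hfr : 0 < t / (w (ψ n) i / d i) := div_pos ht_pos hr
          have hfr1 : t / (w (ψ n) i / d i) ≤ 1 := (div_le_one hr).2 (ht_le i hiS)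
          simp only [if_neg hdi, hfrac i hiS]
          rw [Set.mem_Icc]
          constructor <;> linarith
      have hy : (fun i => c i * w (ψ n) i) ∈ P :=
        box_mem hconv hcp (hwQ (ψ n)).1 c hc
      set y : Fin N → ℝ := fun i => c i * w (ψ n) i with hydef
      have hyw : y = w (ψ n) - t • d := by
        funext i
        rw [hydef, hcdef]
        by_cases hdi : d i = 0
        · simp [hdi]
        · have hiS : i ∈ S := (hSmem i).2 hdi
          have hwi := hwne i hiS
          simp only [if_neg hdi, Pi.sub_apply, Pi.smul_apply, smul_eq_mul]
          field_simp
      have hyi0 : y i0 = 0 := by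
        have hdi0 : d i0 ≠ 0 := (hSmem i0).1 hi0S
        rw [hyw]
        simp only [Pi.sub_apply, Pi.smul_apply, smul_eq_mul]
        rw [ht, hti0, div_mul_cancel₀ _ hdi0, sub_self]
      have hAy : A.mulVec y = A.mulVec (w (ψ n)) := by
        rw [hyw, Matrix.mulVec_sub, Matrix.mulVec_smul, hAd, smul_zero, sub_zero]
      have hysup : ∀ j, y j ≠ 0 → j ∈ J.erase i0 := by
        intro j hj
        rw [Finset.mem_erase]
        refine ⟨fun h => hj (h ▸ hyi0), ?_⟩
        have hwj : w (ψ n) j ≠ 0 := by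
          intro h0
          apply hj
          show c j * w (ψ n) j = 0
          rw [h0, mul_zero]
        exact (hwQ (ψ n)).2 j hwj
      rw [← hAy]
      exact Set.mem_iUnion₂.2 ⟨i0, hi0S, ⟨y, ⟨hy, hysup⟩, rfl⟩⟩
    have hpT : p ∈ T := hTc.mem_of_tendsto (hvp'.comp hψ.tendsto_atTop) hEv
    rw [hT] at hpT
    obtain ⟨i, hiS, x, hxQ, hAx⟩ := by
      simpa only [Set.mem_iUnion, Set.mem_image] using hpT
    exact ⟨x, ⟨hxQ.1, fun j hj => Finset.mem_of_mem_erase (hxQ.2 j hj)⟩, hAx⟩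
  · -- bounded case
    have hfreq : ∃ b : ℝ, ∃ᶠ n in atTop, ‖w n‖ < b := by
      by_contra h
      push_neg at h
      apply hB
      rw [tendsto_atTop]
      intro b
      have := h b
      exact this
    obtain ⟨b, hb⟩ := hfreq
    obtain ⟨φ, hφ, hφb⟩ := extraction_of_frequently_atTop hb
    have hmem : ∀ n, w (φ n) ∈ Metric.closedBall (0 : Fin N → ℝ) b := fun n => by
      rw [Metric.mem_closedBall, dist_zero_right]; exact (hφb n).le
    obtain ⟨x, -, ψ, hψ, hx⟩ := (isCompact_closedBall (0 : Fin N → ℝ) b).tendsto_subseq hmem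
    have hQc : IsClosed {w : Fin N → ℝ | w ∈ P ∧ ∀ i, w i ≠ 0 → i ∈ J} := by
      have h2 : IsClosed {w : Fin N → ℝ | ∀ i, w i ≠ 0 → i ∈ J} := by
        have : {w : Fin N → ℝ | ∀ i, w i ≠ 0 → i ∈ J}
            = ⋂ i ∈ (Jᶜ : Finset (Fin N)), {w : Fin N → ℝ | w i = 0} := by
          ext w
          simp only [Set.mem_setOf_eq, Set.mem_iInter, Finset.mem_compl]
          constructor
          · intro h i hi
            by_contra h0
            exact hi (h i h0)
          · intro h i hi
            by_contra h0
            exact hi (h i h0)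
        rw [this]
        exact isClosed_biInter fun i _ => isClosed_eq (continuous_apply i) continuous_const
      exact hcl.inter h2
    have hxQ : x ∈ {w : Fin N → ℝ | w ∈ P ∧ ∀ i, w i ≠ 0 → i ∈ J} :=
      hQc.mem_of_tendsto hx (Filter.Eventually.of_forall fun n => hwQ _)
    have h1 : Tendsto (fun n => A.mulVec (w (φ (ψ n)))) atTop (𝓝 (A.mulVec x)) :=
      (contA.tendsto x).comp hx
    have h2 : Tendsto (fun n => A.mulVec (w (φ (ψ n)))) atTop (𝓝 p) :=
      hvp'.comp ((hφ.comp hψ).tendsto_atTop)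
    exact ⟨x, hxQ, tendsto_nhds_unique h1 h2⟩

/-- For a closed, convex, CP admissible set `P`, any matrix `A`, any index set `J`
and any `y`, the problem `min ‖A w − y‖₂²` s.t. `w ∈ P`, `supp(w) ⊆ J` attains a
solution; in particular `A P` is closed. -/
theorem stmt_10 {N m : ℕ} (P : Set (Fin N → ℝ)) (hne : P.Nonempty)
    (hcl : IsClosed P) (hconv : Convex ℝ P) (hcp : CPAdmissible P)
    (A : Matrix (Fin m) (Fin N) ℝ) :
    (∀ (J : Set (Fin N)) (y : Fin m → ℝ),
      ∃ w : Fin N → ℝ, (w ∈ P ∧ {i | w i ≠ 0} ⊆ J) ∧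
        ∀ w' : Fin N → ℝ, w' ∈ P → {i | w' i ≠ 0} ⊆ J →
          ∑ i, (A.mulVec w - y) i ^ 2 ≤ ∑ i, (A.mulVec w' - y) i ^ 2) ∧
    IsClosed (A.mulVec '' P) := by
  have h0P : (0 : Fin N → ℝ) ∈ P := by
    obtain ⟨x, hx⟩ := hne
    have := hcp x hx ∅ (Set.empty_subset _); rwa [Set.indicator_empty] at this
  constructor
  · intro J y
    set J' : Finset (Fin N) := (Set.toFinite J).toFinset with hJ'
    have hJ'mem : ∀ i, i ∈ J' ↔ i ∈ J := fun i => (Set.toFinite J).mem_toFinset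
    set Q : Set (Fin N → ℝ) := {w | w ∈ P ∧ {i | w i ≠ 0} ⊆ J} with hQ
    have hQeq : Q = {w | w ∈ P ∧ ∀ i, w i ≠ 0 → i ∈ J'} := by
      ext w
      simp only [hQ, Set.mem_setOf_eq, Set.subset_def, hJ'mem]
    have hK : IsClosed (A.mulVec '' Q) := by
      rw [hQeq]; exact closedQ hcl hconv hcp A J'
    set f : (Fin m → ℝ) → ℝ := fun v => ∑ i, (v i - y i) ^ 2 with hfdef
    have hf : Continuous f := by
      apply continuous_finset_sum
      intro i _
      exact ((continuous_apply i).sub continuous_const).pow 2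
    have h0K : (0 : Fin m → ℝ) ∈ A.mulVec '' Q :=
      ⟨0, ⟨h0P, by simp⟩, Matrix.mulVec_zero A⟩
    set C : Set (Fin m → ℝ) := (A.mulVec '' Q) ∩ f ⁻¹' (Set.Iic (f 0)) with hC
    have hCne : C.Nonempty := ⟨0, h0K, by simp⟩
    have hCc : IsClosed C := hK.inter (isClosed_Iic.preimage hf)
    have hterm : ∀ v : Fin m → ℝ, ∀ i, (v i - y i) ^ 2 ≤ f v := by
      intro v i
      exact Finset.single_le_sum (fun j _ => sq_nonneg (v j - y j)) (Finset.mem_univ i)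
    have hsub : C ⊆ Metric.closedBall y (Real.sqrt (f 0)) := by
      intro v hv
      rw [Metric.mem_closedBall]
      rw [dist_pi_le_iff (Real.sqrt_nonneg _)]
      intro i
      rw [Real.dist_eq, ← Real.sqrt_sq_eq_abs]
      exact Real.sqrt_le_sqrt (le_trans (hterm v i) hv.2)
    have hCcp : IsCompact C :=
      (isCompact_closedBall y _).of_isClosed_subset hCc hsub
    obtain ⟨vm, hvmC, hmin⟩ := hCcp.exists_isMinOn hCne hf.continuousOn
    obtain ⟨w, hwQ, hAw⟩ := hvmC.1
    refine ⟨w, hwQ, ?_⟩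
    intro w' hw'P hw'J
    have hv' : A.mulVec w' ∈ A.mulVec '' Q := ⟨w', ⟨hw'P, hw'J⟩, rfl⟩
    have key : f vm ≤ f (A.mulVec w') := by
      by_cases h : f (A.mulVec w') ≤ f 0
      · exact hmin ⟨hv', h⟩
      · exact le_trans (hmin ⟨h0K, by simp⟩) (le_of_not_ge h)
    have e1 : ∑ i, (A.mulVec w - y) i ^ 2 = f vm := by
      rw [← hAw, hfdef]
      simp only [Pi.sub_apply]
    have e2 : ∑ i, (A.mulVec w' - y) i ^ 2 = f (A.mulVec w') := by
      rw [hfdef]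
      simp only [Pi.sub_apply]
    rw [e1, e2]; exact key
  · have hPeq : A.mulVec '' P
        = A.mulVec '' {w | w ∈ P ∧ ∀ i, w i ≠ 0 → i ∈ (Finset.univ : Finset (Fin N))} := by
      ext w
      simp
    rw [hPeq]
    exact closedQ hcl hconv hcp A Finset.univ
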